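/- (Tail integral bound used in the precoding Proposition.) Let t ≥ 1. There exists δ₀ > 0 (depending only on t) such that for all δ ∈ (0, δ₀) and all P > 0: ∫_{t/(δP)}^∞ Q(√(2·x·P/t))·x^{t−1}·exp(−x)/Γ(t) dx ≤ δ/P^t. (Indeed, using Q(y) ≤ exp(−y²) for y ≥ 0, the left side is at most (t^t/P^t)·exp(−1/δ)·Σ_{k=0}^{t−1} δ^{−k}/k!, which is at most δ/P^t for sufficiently small δ.) -/

import Mathlib

open MeasureTheory Set Real

/-- The Gaussian tail function `Q(x) = (1/√(2π)) ∫_x^∞ exp(-u²/2) du`. -/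
noncomputable def gaussianQ (x : ℝ) : ℝ :=
  (Real.sqrt (2 * Real.pi))⁻¹ * ∫ u in Set.Ioi x, Real.exp (-(u ^ 2) / 2)

lemma exp_sq_integrable : MeasureTheory.Integrable (fun u : ℝ => Real.exp (-(u ^ 2) / 2)) := by
  have := integrable_exp_neg_mul_sq (b := (1/2 : ℝ)) (by norm_num)
  convert this using 2 with u
  ring_nf

lemma gaussianQ_nonneg (x : ℝ) : 0 ≤ gaussianQ x := by
  unfold gaussianQ
  apply mul_nonneg (by positivity)
  apply integral_nonneg
  intro u; positivity

lemma gaussianQ_antitone : Antitone gaussianQ := by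
  intro x y hxy
  unfold gaussianQ
  gcongr (Real.sqrt (2 * Real.pi))⁻¹ * ?_
  apply setIntegral_mono_set exp_sq_integrable.integrableOn
  · filter_upwards with u using by positivity
  · exact HasSubset.Subset.eventuallyLE (Ioi_subset_Ioi hxy)

lemma gaussianQ_le (y : ℝ) (hy : 0 ≤ y) : gaussianQ y ≤ 4 * Real.exp (-(y ^ 2) / 4) := by
  have h1 : (∫ u in Set.Ioi y, Real.exp (-(u ^ 2) / 2))
      ≤ ∫ u in Set.Ioi y, Real.exp (-(y ^ 2) / 4) * Real.exp (-(u ^ 2) / 4) := by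
    apply setIntegral_mono_on exp_sq_integrable.integrableOn
    · have : MeasureTheory.Integrable (fun u : ℝ => Real.exp (-(u ^ 2) / 4)) := by
        have := integrable_exp_neg_mul_sq (b := (1/4 : ℝ)) (by norm_num)
        convert this using 2 with u; ring_nf
      exact (this.const_mul _).integrableOn
    · exact measurableSet_Ioi
    · intro u hu
      rw [← Real.exp_add]
      apply Real.exp_le_exp.2
      have hyu : y ≤ u := le_of_lt hu
      nlinarith [sq_nonneg (u - y)]
  have h2 : (∫ u in Set.Ioi y, Real.exp (-(y ^ 2) / 4) * Real.exp (-(u ^ 2) / 4))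
      ≤ Real.exp (-(y ^ 2) / 4) * Real.sqrt (Real.pi / (1/4)) := by
    rw [integral_const_mul]
    gcongr
    have hint : MeasureTheory.Integrable (fun u : ℝ => Real.exp (-(1/4 : ℝ) * u ^ 2)) :=
      integrable_exp_neg_mul_sq (by norm_num)
    have heq : (fun u : ℝ => Real.exp (-(u ^ 2) / 4)) = fun u : ℝ => Real.exp (-(1/4 : ℝ) * u ^ 2) := by
      funext u; ring_nf
    rw [heq]
    calc (∫ u in Set.Ioi y, Real.exp (-(1/4 : ℝ) * u ^ 2))
        ≤ ∫ u : ℝ, Real.exp (-(1/4 : ℝ) * u ^ 2) := by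
          apply setIntegral_le_integral hint
          filter_upwards with u using by positivity
      _ = Real.sqrt (Real.pi / (1/4)) := integral_gaussian _
  unfold gaussianQ
  calc (Real.sqrt (2 * Real.pi))⁻¹ * ∫ u in Set.Ioi y, Real.exp (-(u ^ 2) / 2)
      ≤ (Real.sqrt (2 * Real.pi))⁻¹ * (Real.exp (-(y ^ 2) / 4) * Real.sqrt (Real.pi / (1/4))) := by
        gcongr
        exact h1.trans h2
    _ ≤ 1 * (Real.exp (-(y ^ 2) / 4) * 4) := by
        gcongr
        · rw [inv_le_one_iff₀]
          right
          rw [Real.one_le_sqrt]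
          nlinarith [Real.pi_gt_three]
        · have h16 : Real.sqrt 16 = 4 := by
            rw [show (16:ℝ) = 4^2 by norm_num, Real.sqrt_sq (by norm_num)]
          rw [show Real.pi / (1/4) = 4 * Real.pi by ring, ← h16]
          apply Real.sqrt_le_sqrt
          nlinarith [Real.pi_lt_d2]
    _ = 4 * Real.exp (-(y ^ 2) / 4) := by ring

lemma integral_exp_neg_mul_Ioi_zero {c : ℝ} (hc : 0 < c) :
    ∫ x in Set.Ioi (0:ℝ), Real.exp (-(c*x)) = c⁻¹ := by
  have h := integral_comp_mul_left_Ioi (fun x => Real.exp (-x)) 0 hc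
  simp only [mul_zero, integral_exp_neg_Ioi, neg_zero, Real.exp_zero, smul_eq_mul,
    mul_one] at h
  exact h

/-- Tail integral bound used in the precoding Proposition:
`∫_{t/(δP)}^∞ Q(√(2xP/t)) x^{t-1} e^{-x}/Γ(t) dx ≤ δ/P^t` for all small enough `δ`. -/
theorem precoding_tail_bound (t : ℕ) (ht : 1 ≤ t) :
    ∃ δ₀ : ℝ, 0 < δ₀ ∧ ∀ δ : ℝ, 0 < δ → δ < δ₀ → ∀ P : ℝ, 0 < P →
      (∫ x in Set.Ioi ((t : ℝ) / (δ * P)),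
          gaussianQ (Real.sqrt (2 * x * P / t)) * x ^ (t - 1) * Real.exp (-x) / Real.Gamma t)
        ≤ δ / P ^ t := by
  have hT0 : (0:ℝ) < t := by exact_mod_cast ht
  refine ⟨((288 : ℝ) * (6*(t:ℝ))^t)⁻¹, by positivity, ?_⟩
  intro δ hδ hδ₀ P hP
  set T : ℝ := (t:ℝ) with hTdef
  set a : ℝ := T / (δ * P) with hadef
  have ha : 0 < a := by positivity
  set c : ℝ := 1 + P / (6*T) with hcdef
  have hc : 0 < c := by positivity
  set C : ℝ := 4 * Real.exp (-(1/(6*δ))) * (6*T/P)^(t-1) with hCdef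
  have hC : 0 ≤ C := by positivity
  have hfact : (0:ℝ) < (Nat.factorial (t-1) : ℝ) := by positivity
  have hGamma : Real.Gamma T = (Nat.factorial (t-1) : ℝ) := by
    have h1 : ((t-1:ℕ):ℝ) + 1 = T := by
      rw [Nat.cast_sub ht]; push_cast; ring
    rw [← h1, Real.Gamma_nat_eq_factorial]
  -- pointwise bound
  have hpt : ∀ x ∈ Set.Ioi a,
      gaussianQ (Real.sqrt (2 * x * P / T)) * x ^ (t - 1) * Real.exp (-x) / Real.Gamma T
        ≤ C * Real.exp (-(c*x)) := by
    intro x hx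
    have hxa : a < x := hx
    have hx0 : 0 < x := ha.trans hxa
    have harg : 0 ≤ 2*x*P/T := by positivity
    have hQ : gaussianQ (Real.sqrt (2*x*P/T)) ≤ 4 * Real.exp (-(x*P/(2*T))) := by
      have h := gaussianQ_le (Real.sqrt (2*x*P/T)) (Real.sqrt_nonneg _)
      rwa [Real.sq_sqrt harg, show -(2*x*P/T)/4 = -(x*P/(2*T)) by ring] at h
    have hsplit : Real.exp (-(x*P/(2*T))) =
        Real.exp (-(x*P/(6*T))) * Real.exp (-(x*P/(6*T))) * Real.exp (-(x*P/(6*T))) := by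
      rw [← Real.exp_add, ← Real.exp_add]; ring_nf
    have h1 : Real.exp (-(x*P/(6*T))) ≤ Real.exp (-(1/(6*δ))) := by
      apply Real.exp_le_exp.2
      have hax : T < x * (δ*P) := by
        have : a * (δ*P) = T := by rw [hadef]; field_simp
        nlinarith
      rw [neg_le_neg_iff, div_le_div_iff₀ (by positivity) (by positivity)]
      nlinarith
    have h2 : x^(t-1) * Real.exp (-(x*P/(6*T))) ≤ (Nat.factorial (t-1) : ℝ) * (6*T/P)^(t-1) := by
      have hk := Real.pow_div_factorial_le_exp (x := x*P/(6*T)) (by positivity) (t-1)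
      have hineq : (x*P/(6*T))^(t-1) ≤ (Nat.factorial (t-1) : ℝ) * Real.exp (x*P/(6*T)) := by
        rw [div_le_iff₀ hfact] at hk; linarith [hk]
      have hxpow : x^(t-1) = (x*P/(6*T))^(t-1) * (6*T/P)^(t-1) := by
        rw [← mul_pow]; congr 1; field_simp
      rw [hxpow]
      calc (x*P/(6*T))^(t-1) * (6*T/P)^(t-1) * Real.exp (-(x*P/(6*T)))
          ≤ ((Nat.factorial (t-1) : ℝ) * Real.exp (x*P/(6*T))) * (6*T/P)^(t-1)
              * Real.exp (-(x*P/(6*T))) := by gcongr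
        _ = (Nat.factorial (t-1) : ℝ) * (6*T/P)^(t-1)
              * (Real.exp (x*P/(6*T)) * Real.exp (-(x*P/(6*T)))) := by ring
        _ = (Nat.factorial (t-1) : ℝ) * (6*T/P)^(t-1) := by
              rw [← Real.exp_add]; simp
    rw [hGamma]
    calc gaussianQ (Real.sqrt (2*x*P/T)) * x^(t-1) * Real.exp (-x) / (Nat.factorial (t-1) : ℝ)
        ≤ (4 * Real.exp (-(x*P/(2*T)))) * x^(t-1) * Real.exp (-x)
            / (Nat.factorial (t-1) : ℝ) := by
          gcongr
      _ = 4 * Real.exp (-(x*P/(6*T))) * (x^(t-1) * Real.exp (-(x*P/(6*T))))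
            * (Real.exp (-(x*P/(6*T))) * Real.exp (-x)) / (Nat.factorial (t-1) : ℝ) := by
          rw [hsplit]; ring
      _ ≤ 4 * Real.exp (-(1/(6*δ))) * ((Nat.factorial (t-1) : ℝ) * (6*T/P)^(t-1))
            * (Real.exp (-(x*P/(6*T))) * Real.exp (-x)) / (Nat.factorial (t-1) : ℝ) := by
          gcongr <;> positivity
      _ = C * Real.exp (-(c*x)) := by
          have hcx : -(x*P/(6*T)) + -x = -(c*x) := by
            rw [hcdef]; field_simp; ring
          rw [← Real.exp_add, hcx, hCdef, div_eq_iff (ne_of_gt hfact)]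
          ring
  -- integrability
  have hmaj : IntegrableOn (fun x => C * Real.exp (-(c*x))) (Set.Ioi a) := by
    have h := exp_neg_integrableOn_Ioi a hc
    simp only [neg_mul] at h
    exact h.const_mul C
  have hmeas : AEStronglyMeasurable
      (fun x => gaussianQ (Real.sqrt (2 * x * P / T)) * x ^ (t - 1) * Real.exp (-x)
          / Real.Gamma T) (volume.restrict (Set.Ioi a)) := by
    apply Measurable.aestronglyMeasurable
    apply Measurable.div_const
    exact ((gaussianQ_antitone.measurable.comp (by fun_prop)).mul (by fun_prop)).mul (by fun_prop)
  have hnn : ∀ x ∈ Set.Ioi a,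
      0 ≤ gaussianQ (Real.sqrt (2 * x * P / T)) * x ^ (t - 1) * Real.exp (-x) / Real.Gamma T := by
    intro x hx
    have hx0 : 0 < x := ha.trans hx
    have := gaussianQ_nonneg (Real.sqrt (2 * x * P / T))
    rw [hGamma]
    positivity
  have hint : IntegrableOn
      (fun x => gaussianQ (Real.sqrt (2 * x * P / T)) * x ^ (t - 1) * Real.exp (-x)
          / Real.Gamma T) (Set.Ioi a) := by
    apply hmaj.mono' hmeas
    filter_upwards [ae_restrict_mem measurableSet_Ioi] with x hx
    rw [Real.norm_eq_abs, abs_of_nonneg (hnn x hx)]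
    exact hpt x hx
  -- chain
  have hinvc : c⁻¹ ≤ 6*T/P := by
    rw [inv_le_comm₀ hc (by positivity), inv_div, hcdef]
    have : 0 < P/(6*T) := by positivity
    linarith
  have hexpbound : Real.exp (-(1/(6*δ))) ≤ 72 * δ^2 := by
    have hz : 0 ≤ 1/(6*δ) := by positivity
    have hq := Real.quadratic_le_exp_of_nonneg hz
    have h2 : (1/(6*δ))^2/2 ≤ Real.exp (1/(6*δ)) := by nlinarith
    rw [Real.exp_neg]
    rw [inv_le_comm₀ (Real.exp_pos _) (by positivity)]
    calc (72 * δ^2)⁻¹ = (1/(6*δ))^2/2 := by field_simp; ring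
      _ ≤ Real.exp (1/(6*δ)) := h2
  have hKlt : δ * (288 * (6*T)^t) < 1 := by
    have hK : (0:ℝ) < 288 * (6*T)^t := by positivity
    calc δ * (288 * (6*T)^t) < (288 * (6*T)^t)⁻¹ * (288 * (6*T)^t) := by gcongr
      _ = 1 := inv_mul_cancel₀ (ne_of_gt hK)
  have hfinal : C * c⁻¹ ≤ δ / P^t := by
    calc C * c⁻¹ ≤ C * (6*T/P) := by gcongr
      _ = 4 * Real.exp (-(1/(6*δ))) * (6*T/P)^t := by
          rw [hCdef, mul_assoc, ← pow_succ, Nat.sub_add_cancel ht]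
      _ ≤ 4 * (72 * δ^2) * (6*T/P)^t := by gcongr
      _ = 288 * δ^2 * ((6*T)^t / P^t) := by rw [div_pow]; ring
      _ = (δ * (288 * (6*T)^t)) * δ / P^t := by ring
      _ ≤ 1 * δ / P^t := by gcongr
      _ = δ / P^t := by ring
  calc (∫ x in Set.Ioi a,
          gaussianQ (Real.sqrt (2 * x * P / T)) * x ^ (t - 1) * Real.exp (-x) / Real.Gamma T)
      ≤ ∫ x in Set.Ioi a, C * Real.exp (-(c*x)) :=
        setIntegral_mono_on hint hmaj measurableSet_Ioi hpt
    _ = C * ∫ x in Set.Ioi a, Real.exp (-(c*x)) := by rw [integral_const_mul]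
    _ ≤ C * ∫ x in Set.Ioi (0:ℝ), Real.exp (-(c*x)) := by
        gcongr C * ?_
        apply setIntegral_mono_set
        · have h := exp_neg_integrableOn_Ioi (0:ℝ) hc
          simp only [neg_mul] at h
          exact h
        · filter_upwards with u using by positivity
        · exact HasSubset.Subset.eventuallyLE (Ioi_subset_Ioi ha.le)
    _ = C * c⁻¹ := by rw [integral_exp_neg_mul_Ioi_zero hc]
    _ ≤ δ / P^t := hfinal
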